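/- Let (X,d,μ) be an η-Ahlfors regular quasi-metric measure space with η > 0, triangular constant κ ≥ 1 and Ahlfors constants 0 < a ≤ A < ∞, and let ρ be the third order hypermetric induced by d. Let φ : (0,∞) → [0,∞) be nonincreasing. Then for every λ > 1 and every x ∈ X, ∬_{X×X} φ(ρ(x,y,z)) dμ(y) dμ(z) ≤ (λ^{4η} / log λ) · A² (2κ)^{2η} · ∫₀^∞ φ(t) t^{2η−1} dt. -/

import Mathlib

open MeasureTheory ENNReal

/-- The third order hypermetric induced by `d`:
`ρ(x,y,z) = inf_{u ∈ X} max {d(x,u), d(y,u), d(z,u)}`. -/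
noncomputable def hyperRho {X : Type*} (d : X → X → ℝ) (x y z : X) : ℝ :=
  ⨅ u : X, max (d x u) (max (d y u) (d z u))

/-- `d` is a quasi-metric on `X` with triangular constant `κ`. -/
def IsQuasiMetric {X : Type*} (d : X → X → ℝ) (κ : ℝ) : Prop :=
  (∀ x y, 0 ≤ d x y) ∧ (∀ x y, (d x y = 0 ↔ x = y)) ∧ (∀ x y, d x y = d y x) ∧
    (∀ x y z, d x z ≤ κ * (d x y + d y z))

/-- `(X,d,μ)` is `η`-Ahlfors regular with constants `a ≤ A`. -/
def IsAhlfors {X : Type*} [MeasurableSpace X] (d : X → X → ℝ) (μ : Measure X)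
    (η a A : ℝ) : Prop :=
  ∀ x : X, ∀ r : ℝ, 0 < r →
    ENNReal.ofReal (a * r ^ η) ≤ μ {y | d x y < r} ∧
      μ {y | d x y < r} ≤ ENNReal.ofReal (A * r ^ η)

/-- Upper bound: for every `λ > 1` and every `x`,
`∬ φ(ρ(x,y,z)) dμ dμ ≤ (λ^{4η}/log λ) A² (2κ)^{2η} ∫₀^∞ φ(t) t^{2η-1} dt`. -/
theorem statement10 {X : Type*} [MeasurableSpace X]
    (d : X → X → ℝ) (κ : ℝ) (hκ : 1 ≤ κ) (hqm : IsQuasiMetric d κ)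
    (hd_meas : Measurable fun p : X × X => d p.1 p.2)
    (μ : Measure X) (η : ℝ) (hη : 0 < η)
    (a A : ℝ) (ha : 0 < a) (haA : a ≤ A) (hAhl : IsAhlfors d μ η a A)
    (φ : ℝ → ℝ) (hφ_nonneg : ∀ t, 0 < t → 0 ≤ φ t)
    (hφ_mono : ∀ s t, 0 < s → s ≤ t → φ t ≤ φ s)
    (l : ℝ) (hl : 1 < l) (x : X) :
    (∫⁻ y, ∫⁻ z, ENNReal.ofReal (φ (hyperRho d x y z)) ∂μ ∂μ) ≤
      ENNReal.ofReal (l ^ (4 * η) / Real.log l * (A ^ 2 * (2 * κ) ^ (2 * η))) *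
        ∫⁻ t in Set.Ioi (0 : ℝ), ENNReal.ofReal (φ t * t ^ (2 * η - 1)) := by
  obtain ⟨hd0, hdeq, hdsym, hdtri⟩ := hqm
  have hκ0 : (0:ℝ) < κ := lt_of_lt_of_le one_pos hκ
  have h2κ : (0:ℝ) < 2*κ := by linarith
  have hl0 : (0:ℝ) < l := lt_trans one_pos hl
  have hA : (0:ℝ) < A := lt_of_lt_of_le ha haA
  have hlog : 0 < Real.log l := Real.log_pos hl
  have hg : Measurable fun y => d x y :=
    hd_meas.comp (measurable_const.prodMk measurable_id)
  haveI : Nonempty X := ⟨x⟩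
  -- lower bound for hyperRho
  have hρ : ∀ y z : X, max (d x y) (d x z) / (2*κ) ≤ hyperRho d x y z := by
    intro y z
    refine le_ciInf fun u => ?_
    rw [div_le_iff₀ h2κ]
    set M := max (d x u) (max (d y u) (d z u)) with hM
    have hxu : d x u ≤ M := le_max_left _ _
    have hyu : d y u ≤ M := le_trans (le_max_left _ _) (le_max_right _ _)
    have hzu : d z u ≤ M := le_trans (le_max_right _ _) (le_max_right _ _)
    have hxy : d x y ≤ 2*κ*M := by
      calc d x y ≤ κ * (d x u + d u y) := hdtri x u y
        _ = κ * (d x u + d y u) := by rw [hdsym u y]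
        _ ≤ κ * (M + M) := by gcongr
        _ = 2*κ*M := by ring
    have hxz : d x z ≤ 2*κ*M := by
      calc d x z ≤ κ * (d x u + d u z) := hdtri x u z
        _ = κ * (d x u + d z u) := by rw [hdsym u z]
        _ ≤ κ * (M + M) := by gcongr
        _ = 2*κ*M := by ring
    calc max (d x y) (d x z) ≤ 2*κ*M := max_le hxy hxz
      _ = M * (2*κ) := by ring
  -- the singleton {x} is null
  have hx0 : μ {x} = 0 := by
    have h1 : ∀ ε : ℝ, 0 < ε → μ {x} ≤ ENNReal.ofReal ε := by
      intro ε hε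
      set r : ℝ := (ε/A) ^ (η⁻¹) with hr
      have hεA : 0 < ε / A := div_pos hε hA
      have hr0 : 0 < r := Real.rpow_pos_of_pos hεA _
      have hsub : {x} ⊆ {y | d x y < r} := by
        intro y hy
        rw [Set.mem_singleton_iff] at hy
        subst hy
        have : d y y = 0 := (hdeq y y).mpr rfl
        simpa [this] using hr0
      calc μ {x} ≤ μ {y | d x y < r} := measure_mono hsub
        _ ≤ ENNReal.ofReal (A * r ^ η) := (hAhl x r hr0).2
        _ = ENNReal.ofReal ε := by
            congr 1
            rw [hr, ← Real.rpow_mul hεA.le, inv_mul_cancel₀ hη.ne', Real.rpow_one]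
            field_simp
    refine le_antisymm ?_ zero_le
    refine ENNReal.le_of_forall_pos_le_add fun ε hε _ => ?_
    have := h1 ε (by exact_mod_cast hε)
    simpa [ENNReal.ofReal_coe_nnreal] using this
  -- annuli machinery
  have hBmeas : ∀ k : ℤ, MeasurableSet {z : X | d x z < l ^ k} := fun k =>
    measurableSet_lt hg measurable_const
  have hμB : ∀ k : ℤ, μ {z : X | d x z < l ^ k} ≤ ENNReal.ofReal (A * (l^k) ^ η) :=
    fun k => (hAhl x (l^k) (zpow_pos hl0 k)).2
  have hSmeas : ∀ (y : X) (k : ℤ),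
      MeasurableSet {z : X | l^k ≤ max (d x y) (d x z) ∧ max (d x y) (d x z) < l^(k+1)} := by
    intro y k
    have hm : Measurable fun z => max (d x y) (d x z) := measurable_const.max hg
    exact hm measurableSet_Ico
  -- Step 1 : pointwise bound by a sum of indicators
  have step1 : ∀ y, 0 < d x y → ∀ z, ENNReal.ofReal (φ (hyperRho d x y z)) ≤
      ∑' k : ℤ, Set.indicator
        {z' : X | l^k ≤ max (d x y) (d x z') ∧ max (d x y) (d x z') < l^(k+1)}
        (fun _ => ENNReal.ofReal (φ (l^k / (2*κ)))) z := by
    intro y hy z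
    have hm0 : 0 < max (d x y) (d x z) := lt_of_lt_of_le hy (le_max_left _ _)
    obtain ⟨k, hk⟩ := _root_.exists_mem_Ico_zpow hm0 hl
    have hzS : z ∈ {z' : X | l^k ≤ max (d x y) (d x z') ∧ max (d x y) (d x z') < l^(k+1)} :=
      ⟨hk.1, hk.2⟩
    have hbound : ENNReal.ofReal (φ (hyperRho d x y z)) ≤ ENNReal.ofReal (φ (l^k / (2*κ))) := by
      apply ENNReal.ofReal_le_ofReal
      apply hφ_mono
      · exact div_pos (zpow_pos hl0 k) h2κ
      · calc l^k / (2*κ) ≤ max (d x y) (d x z) / (2*κ) := by gcongr; exact hk.1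
          _ ≤ hyperRho d x y z := hρ y z
    calc ENNReal.ofReal (φ (hyperRho d x y z)) ≤ ENNReal.ofReal (φ (l^k / (2*κ))) := hbound
      _ = Set.indicator {z' : X | l^k ≤ max (d x y) (d x z') ∧ max (d x y) (d x z') < l^(k+1)}
          (fun _ => ENNReal.ofReal (φ (l^k / (2*κ)))) z :=
          (Set.indicator_of_mem hzS fun _ => ENNReal.ofReal (φ (l^k / (2*κ)))).symm
      _ ≤ _ := ENNReal.le_tsum k
  -- a.e. positivity of d x y
  have hae : ∀ᵐ y ∂μ, 0 < d x y := by
    rw [ae_iff]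
    refine measure_mono_null ?_ hx0
    intro y hy
    simp only [Set.mem_setOf_eq, not_lt] at hy
    have h0 : d x y = 0 := le_antisymm hy (hd0 x y)
    exact ((hdeq x y).mp h0).symm
  -- Step : main bound by the series
  have main1 : (∫⁻ y, ∫⁻ z, ENNReal.ofReal (φ (hyperRho d x y z)) ∂μ ∂μ) ≤
      ∑' k : ℤ, ENNReal.ofReal (φ (l^k / (2*κ))) * μ {z : X | d x z < l ^ (k+1)}
        * μ {z : X | d x z < l ^ (k+1)} := by
    calc (∫⁻ y, ∫⁻ z, ENNReal.ofReal (φ (hyperRho d x y z)) ∂μ ∂μ)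
        ≤ ∫⁻ y, ∫⁻ z, (∑' k : ℤ, Set.indicator
            {z' : X | l^k ≤ max (d x y) (d x z') ∧ max (d x y) (d x z') < l^(k+1)}
            (fun _ => ENNReal.ofReal (φ (l^k / (2*κ)))) z) ∂μ ∂μ := by
          refine lintegral_mono_ae ?_
          filter_upwards [hae] with y hy
          exact lintegral_mono (step1 y hy)
      _ ≤ ∫⁻ y, (∑' k : ℤ, Set.indicator {y' : X | d x y' < l ^ (k+1)}
            (fun _ => ENNReal.ofReal (φ (l^k / (2*κ))) * μ {z : X | d x z < l ^ (k+1)}) y) ∂μ := by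
          refine lintegral_mono fun y => ?_
          rw [lintegral_tsum fun k => (measurable_const.indicator (hSmeas y k)).aemeasurable]
          refine ENNReal.tsum_le_tsum fun k => ?_
          rw [lintegral_indicator_const (hSmeas y k)]
          by_cases hy : d x y < l^(k+1)
          · rw [Set.indicator_of_mem (show y ∈ {y' : X | d x y' < l ^ (k+1)} from hy)]
            refine mul_le_mul_right (measure_mono fun z hz => ?_) _
            exact lt_of_le_of_lt (le_trans (le_max_right _ _) (le_of_eq rfl)) hz.2
          · rw [Set.indicator_of_notMem (show y ∉ {y' : X | d x y' < l ^ (k+1)} from hy)]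
            have hempty : {z' : X | l^k ≤ max (d x y) (d x z') ∧ max (d x y) (d x z') < l^(k+1)}
                = (∅ : Set X) := by
              ext z
              simp only [Set.mem_setOf_eq, Set.mem_empty_iff_false, iff_false, not_and, not_lt]
              intro _
              exact le_trans (not_lt.mp hy) (le_max_left _ _)
            rw [hempty, measure_empty, mul_zero]
      _ = ∑' k : ℤ, ENNReal.ofReal (φ (l^k / (2*κ))) * μ {z : X | d x z < l ^ (k+1)}
            * μ {z : X | d x z < l ^ (k+1)} := by
          rw [lintegral_tsum fun k => (measurable_const.indicator (hBmeas (k+1))).aemeasurable]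
          exact tsum_congr fun k => lintegral_indicator_const (hBmeas (k+1)) _
  -- per-annulus comparison with the integral
  have key2 : ∀ k : ℤ, ENNReal.ofReal (φ (l^k / (2*κ))) * μ {z : X | d x z < l ^ (k+1)}
      * μ {z : X | d x z < l ^ (k+1)} ≤
      ENNReal.ofReal (l ^ (4 * η) / Real.log l * (A ^ 2 * (2 * κ) ^ (2 * η))) *
        ∫⁻ t in Set.Ioc (l^(k-1)/(2*κ)) (l^k/(2*κ)), ENNReal.ofReal (φ t * t ^ (2*η-1)) := by
    intro k
    set C : ℝ := l ^ (4 * η) / Real.log l * (A ^ 2 * (2 * κ) ^ (2 * η)) with hCdef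
    set α : ℝ := l^(k-1)/(2*κ) with hαdef
    set β : ℝ := l^k/(2*κ) with hβdef
    have hα0 : 0 < α := div_pos (zpow_pos hl0 _) h2κ
    have hβ0 : 0 < β := div_pos (zpow_pos hl0 _) h2κ
    have hαβ : α < β := by
      rw [hαdef, hβdef, div_lt_div_iff_of_pos_right h2κ]
      exact zpow_lt_zpow_right₀ hl (by omega)
    have hφβ : 0 ≤ φ β := hφ_nonneg β hβ0
    have hC0 : 0 ≤ C := by
      apply mul_nonneg (div_nonneg (Real.rpow_nonneg hl0.le _) hlog.le)
      positivity
    -- the value of ∫ 1/t over the interval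
    have hinv : (∫⁻ t in Set.Ioc α β, ENNReal.ofReal t⁻¹) = ENNReal.ofReal (Real.log l) := by
      have hii : IntervalIntegrable (fun t : ℝ => t⁻¹) volume α β := by
        apply intervalIntegral.intervalIntegrable_inv
        · intro t ht
          rw [Set.uIcc_of_le hαβ.le] at ht
          exact ne_of_gt (lt_of_lt_of_le hα0 ht.1)
        · exact continuousOn_id
      have hnn : 0 ≤ᵐ[volume.restrict (Set.Ioc α β)] fun t : ℝ => t⁻¹ := by
        filter_upwards [ae_restrict_mem measurableSet_Ioc] with t ht
        exact inv_nonneg.mpr (le_of_lt (lt_trans hα0 ht.1))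
      rw [← ofReal_integral_eq_lintegral_ofReal hii.1 hnn]
      congr 1
      rw [← intervalIntegral.integral_of_le hαβ.le, integral_inv_of_pos hα0 hβ0]
      congr 1
      rw [hβdef, hαdef, div_div_div_comm, div_self (ne_of_gt h2κ), div_one,
        ← zpow_sub₀ (ne_of_gt hl0)]
      norm_num
    -- lower bound of the integral
    have hint : ENNReal.ofReal (φ β * α ^ (2*η) * Real.log l) ≤
        ∫⁻ t in Set.Ioc α β, ENNReal.ofReal (φ t * t ^ (2*η-1)) := by
      calc ENNReal.ofReal (φ β * α ^ (2*η) * Real.log l)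
          = ENNReal.ofReal (φ β * α ^ (2*η)) * ENNReal.ofReal (Real.log l) :=
            ENNReal.ofReal_mul (by positivity)
        _ = ENNReal.ofReal (φ β * α ^ (2*η)) * ∫⁻ t in Set.Ioc α β, ENNReal.ofReal t⁻¹ := by
            rw [hinv]
        _ = ∫⁻ t in Set.Ioc α β, ENNReal.ofReal (φ β * α ^ (2*η)) * ENNReal.ofReal t⁻¹ :=
            (lintegral_const_mul _ measurable_inv.ennreal_ofReal).symm
        _ = ∫⁻ t in Set.Ioc α β, ENNReal.ofReal (φ β * α ^ (2*η) * t⁻¹) :=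
            lintegral_congr fun t => (ENNReal.ofReal_mul (by positivity)).symm
        _ ≤ ∫⁻ t in Set.Ioc α β, ENNReal.ofReal (φ t * t ^ (2*η-1)) := by
            refine lintegral_mono_ae ?_
            filter_upwards [ae_restrict_mem measurableSet_Ioc] with t ht
            refine ENNReal.ofReal_le_ofReal ?_
            have ht0 : 0 < t := lt_trans hα0 ht.1
            have h1 : φ β ≤ φ t := hφ_mono t β ht0 ht.2
            have h2 : α ^ (2*η) ≤ t ^ (2*η) :=
              Real.rpow_le_rpow hα0.le ht.1.le (by positivity)
            have h3 : t ^ (2*η-1) = t ^ (2*η) * t⁻¹ := by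
              rw [Real.rpow_sub ht0, Real.rpow_one, div_eq_mul_inv]
            rw [h3]
            calc φ β * α ^ (2*η) * t⁻¹ = φ β * (α ^ (2*η) * t⁻¹) := by ring
              _ ≤ φ t * (t ^ (2*η) * t⁻¹) := by
                  refine mul_le_mul h1 ?_ (by positivity) (hφ_nonneg t ht0)
                  exact mul_le_mul_of_nonneg_right h2 (inv_nonneg.mpr ht0.le)
              _ = φ t * (t ^ (2*η) * t⁻¹) := rfl
    -- the real algebraic identity
    have e1 : α ^ (2*η) = l ^ (((k:ℝ)-1) * (2*η)) / (2*κ) ^ (2*η) := by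
      rw [hαdef, Real.div_rpow (zpow_pos hl0 _).le h2κ.le]
      congr 1
      rw [← Real.rpow_intCast l (k-1), ← Real.rpow_mul hl0.le]
      push_cast
      ring_nf
    have e2 : ((l^(k+1) : ℝ)) ^ η = l ^ (((k:ℝ)+1) * η) := by
      rw [← Real.rpow_intCast l (k+1), ← Real.rpow_mul hl0.le]
      push_cast
      ring_nf
    have e3 : l ^ (4*η) * l ^ (((k:ℝ)-1)*(2*η)) = (l ^ (((k:ℝ)+1)*η))^2 := by
      rw [sq, ← Real.rpow_add hl0, ← Real.rpow_add hl0]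
      congr 1
      ring
    have E : φ β * (A * (l^(k+1) : ℝ) ^ η)^2 = C * (φ β * α ^ (2*η) * Real.log l) := by
      rw [hCdef, e1, e2]
      generalize l ^ (4*η) = u at e3 ⊢
      generalize l ^ (((k:ℝ)-1)*(2*η)) = v at e3 ⊢
      generalize l ^ (((k:ℝ)+1)*η) = w at e3 ⊢
      field_simp
      linear_combination (-φ β) * e3
    -- conclusion for this k
    calc ENNReal.ofReal (φ (l^k / (2*κ))) * μ {z : X | d x z < l ^ (k+1)}
          * μ {z : X | d x z < l ^ (k+1)}
        ≤ ENNReal.ofReal (φ β) * ENNReal.ofReal (A * (l^(k+1)) ^ η)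
          * ENNReal.ofReal (A * (l^(k+1)) ^ η) := by
          gcongr <;> exact hμB (k+1)
      _ = ENNReal.ofReal (φ β * (A * (l^(k+1) : ℝ) ^ η)^2) := by
          rw [← ENNReal.ofReal_mul hφβ, ← ENNReal.ofReal_mul (by positivity)]
          congr 1
          ring
      _ = ENNReal.ofReal (C * (φ β * α ^ (2*η) * Real.log l)) := by rw [E]
      _ = ENNReal.ofReal C * ENNReal.ofReal (φ β * α ^ (2*η) * Real.log l) :=
          ENNReal.ofReal_mul hC0
      _ ≤ ENNReal.ofReal C * ∫⁻ t in Set.Ioc α β, ENNReal.ofReal (φ t * t ^ (2*η-1)) :=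
          mul_le_mul_right hint _
  -- the intervals are pairwise disjoint and contained in (0,∞)
  have hmono : ∀ i j : ℤ, i ≤ j → l^i/(2*κ) ≤ l^j/(2*κ) := by
    intro i j hij
    gcongr
    exact hl.le
  have hIdisj : Pairwise (Function.onFun Disjoint
      fun k : ℤ => Set.Ioc (l^(k-1)/(2*κ)) (l^k/(2*κ))) := by
    intro i j hij
    refine Set.Ioc_disjoint_Ioc.mpr ?_
    rcases lt_or_gt_of_ne hij with h | h
    · calc min (l^i/(2*κ)) (l^j/(2*κ)) ≤ l^i/(2*κ) := min_le_left _ _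
        _ ≤ l^(j-1)/(2*κ) := hmono _ _ (by omega)
        _ ≤ max (l^(i-1)/(2*κ)) (l^(j-1)/(2*κ)) := le_max_right _ _
    · calc min (l^i/(2*κ)) (l^j/(2*κ)) ≤ l^j/(2*κ) := min_le_right _ _
        _ ≤ l^(i-1)/(2*κ) := hmono _ _ (by omega)
        _ ≤ max (l^(i-1)/(2*κ)) (l^(j-1)/(2*κ)) := le_max_left _ _
  have hIsub : (⋃ k : ℤ, Set.Ioc (l^(k-1)/(2*κ)) (l^k/(2*κ))) ⊆ Set.Ioi (0:ℝ) := by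
    intro t ht
    obtain ⟨s, ⟨k, rfl⟩, hts⟩ := ht
    exact lt_trans (div_pos (zpow_pos hl0 _) h2κ) hts.1
  -- final assembly
  calc (∫⁻ y, ∫⁻ z, ENNReal.ofReal (φ (hyperRho d x y z)) ∂μ ∂μ)
      ≤ ∑' k : ℤ, ENNReal.ofReal (φ (l^k / (2*κ))) * μ {z : X | d x z < l ^ (k+1)}
        * μ {z : X | d x z < l ^ (k+1)} := main1
    _ ≤ ∑' k : ℤ, ENNReal.ofReal (l ^ (4 * η) / Real.log l * (A ^ 2 * (2 * κ) ^ (2 * η))) *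
        ∫⁻ t in Set.Ioc (l^(k-1)/(2*κ)) (l^k/(2*κ)), ENNReal.ofReal (φ t * t ^ (2*η-1)) :=
        ENNReal.tsum_le_tsum key2
    _ = ENNReal.ofReal (l ^ (4 * η) / Real.log l * (A ^ 2 * (2 * κ) ^ (2 * η))) *
        ∑' k : ℤ, ∫⁻ t in Set.Ioc (l^(k-1)/(2*κ)) (l^k/(2*κ)),
          ENNReal.ofReal (φ t * t ^ (2*η-1)) := ENNReal.tsum_mul_left
    _ = ENNReal.ofReal (l ^ (4 * η) / Real.log l * (A ^ 2 * (2 * κ) ^ (2 * η))) *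
        ∫⁻ t in ⋃ k : ℤ, Set.Ioc (l^(k-1)/(2*κ)) (l^k/(2*κ)),
          ENNReal.ofReal (φ t * t ^ (2*η-1)) := by
        rw [lintegral_iUnion (fun k => measurableSet_Ioc) hIdisj]
    _ ≤ ENNReal.ofReal (l ^ (4 * η) / Real.log l * (A ^ 2 * (2 * κ) ^ (2 * η))) *
        ∫⁻ t in Set.Ioi (0:ℝ), ENNReal.ofReal (φ t * t ^ (2*η-1)) :=
        mul_le_mul_right (lintegral_mono_set hIsub) _
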